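/- Let (t_k) be a strictly increasing sequence with T_min ≤ t_{k+1} − t_k ≤ T_max, and let D^N be the nonuniform divided-difference operator defined recursively by D^0 f[k] = f(t_k) and D^N f[k] = (D^{N−1}f[k+1] − D^{N−1}f[k])/(t_{k+N} − t_k). If G is N-times differentiable with G' = g and ‖g^{(N−1)}‖_∞ ≤ Ω^{N−1}‖g‖_∞, then |D^N G[k]| ≤ (1/(Ω·N!)) · ((T_max/T_min)·Ω·e)^N · ‖g‖_∞ for all k. -/

import Mathlib

/-- The nonuniform divided-difference operator on nodes `t`:
`D t f 0 k = f k`, `D t f (N+1) k = (D t f N (k+1) - D t f N k)/(t (k+N+1) - t k)`. -/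
noncomputable def nonUnifDiff (t : ℤ → ℝ) (f : ℤ → ℝ) : ℕ → ℤ → ℝ
  | 0 => f
  | N + 1 => fun k =>
      (nonUnifDiff t f N (k + 1) - nonUnifDiff t f N k) / (t (k + (N : ℤ) + 1) - t k)

lemma nUD_succ (t f : ℤ → ℝ) (N : ℕ) (k : ℤ) :
    nonUnifDiff t f (N+1) k =
      (nonUnifDiff t f N (k+1) - nonUnifDiff t f N k) / (t (k + (N : ℤ) + 1) - t k) := rfl

lemma nUD_sum (t : ℤ → ℝ) (n : ℕ) (a : ℕ → ℝ) (f : ℕ → ℤ → ℝ) :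
    ∀ (N : ℕ) (k : ℤ), nonUnifDiff t (fun j => ∑ i ∈ Finset.range n, a i * f i j) N k
      = ∑ i ∈ Finset.range n, a i * nonUnifDiff t (f i) N k := by
  intro N
  induction N with
  | zero => intro k; rfl
  | succ N ih =>
      intro k
      simp only [nUD_succ, ih, ← Finset.sum_sub_distrib, Finset.sum_div, ← mul_sub,
        mul_div_assoc]

lemma nUD_sub (t : ℤ → ℝ) (p q : ℤ → ℝ) :
    ∀ (N : ℕ) (k : ℤ), nonUnifDiff t (fun j => p j - q j) N k
      = nonUnifDiff t p N k - nonUnifDiff t q N k := by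
  intro N
  induction N with
  | zero => intro k; rfl
  | succ N ih =>
      intro k
      simp only [nUD_succ, ih, sub_div]
      ring

lemma nUD_const (t : ℤ → ℝ) (c : ℝ) :
    ∀ (N : ℕ) (k : ℤ), nonUnifDiff t (fun _ => c) (N+1) k = 0 := by
  intro N
  induction N with
  | zero => intro k; simp [nUD_succ, nonUnifDiff]
  | succ N ih => intro k; simp [nUD_succ (N := N+1), ih]

lemma nUD_shift (t : ℤ → ℝ) (hd : ∀ (k : ℤ) (n : ℕ), t k < t (k + (n:ℤ) + 1))
    (a : ℝ) (h : ℤ → ℝ) :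
    ∀ (n : ℕ) (k : ℤ), nonUnifDiff t (fun j => (t j - a) * h j) (n+1) k
      = (t k - a) * nonUnifDiff t h (n+1) k + nonUnifDiff t h n (k+1) := by
  intro n
  induction n with
  | zero =>
      intro k
      have hne : t (k + (0:ℤ) + 1) - t k ≠ 0 := sub_ne_zero.2 (ne_of_gt (hd k 0))
      simp only [nUD_succ, nonUnifDiff, Nat.cast_zero, add_zero] at *
      field_simp
      ring
  | succ n ih =>
      intro k
      have hne : t (k + ((n:ℤ)+1) + 1) - t k ≠ 0 := by
        have := hd k (n+1); push_cast at this ⊢; exact sub_ne_zero.2 (ne_of_gt this)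
      have e1 := ih k
      have e2 := ih (k+1)
      have hrec : nonUnifDiff t h (n+1) (k+1)
          = (nonUnifDiff t h n (k+1+1) - nonUnifDiff t h n (k+1)) / (t (k+1 + (n:ℤ) + 1) - t (k+1)) := rfl
      have hrec2 : nonUnifDiff t h (n+2) k
          = (nonUnifDiff t h (n+1) (k+1) - nonUnifDiff t h (n+1) k) / (t (k + ((n:ℤ)+1) + 1) - t k) := by
        rw [nUD_succ]; push_cast; ring_nf
      rw [nUD_succ]
      push_cast
      rw [e1, e2]
      rw [hrec2, hrec]
      have hne2 : t (k + 1 + (n:ℤ) + 1) - t (k+1) ≠ 0 := sub_ne_zero.2 (ne_of_gt (hd (k+1) n))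
      have harg : k + 1 + (n:ℤ) + 1 = k + ((n:ℤ)+1) + 1 := by ring
      rw [harg] at hne2 ⊢
      field_simp
      ring

lemma nUD_pow (t : ℤ → ℝ) (hd : ∀ (k : ℤ) (n : ℕ), t k < t (k + (n:ℤ) + 1)) (c : ℝ) :
    ∀ (i N : ℕ), i < N → ∀ k : ℤ, nonUnifDiff t (fun j => (t j - c)^i) N k = 0 := by
  intro i
  induction i with
  | zero =>
      intro N hN k
      obtain ⟨m, rfl⟩ := Nat.exists_eq_add_of_lt hN
      have : (fun j : ℤ => (t j - c)^0) = (fun _ : ℤ => (1:ℝ)) := by funext j; simp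
      rw [this]
      have := nUD_const t 1 (0 + m) k
      simpa using this
  | succ i ih =>
      intro N hN k
      obtain ⟨m, rfl⟩ := Nat.exists_eq_add_of_lt hN
      have hfun : (fun j : ℤ => (t j - c)^(i+1)) = (fun j : ℤ => (t j - c) * ((t j - c)^i)) := by
        funext j; ring
      rw [hfun]
      have key := nUD_shift t hd c (fun j => (t j - c)^i) (i + m + 1) k
      have h1 : i + 1 + m + 1 = (i + m + 1) + 1 := by omega
      rw [h1, key, ih (i+m+1+1) (by omega) k, ih (i+m+1) (by omega) (k+1)]
      ring

open intervalIntegral in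
lemma taylor_two_sided_bound :
    ∀ (n : ℕ) (f : ℝ → ℝ) (K c : ℝ), ContDiff ℝ (n : ℕ∞) f →
    (∀ y : ℝ, |iteratedDeriv n f y| ≤ K) → ∀ x : ℝ,
    |f x - ∑ i ∈ Finset.range n, iteratedDeriv i f c * (x - c)^i / (Nat.factorial i)|
      ≤ K * |x - c|^n / (Nat.factorial n) := by
  intro n
  induction n with
  | zero =>
      intro f K c _ hK x
      simpa using hK x
  | succ n ih =>
      intro f K c hf hK x
      have hf2 : ContDiff ℝ ((n : WithTop ℕ∞) + 1) f := by exact_mod_cast hf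
      rw [contDiff_succ_iff_deriv] at hf2
      have hdiff : Differentiable ℝ f := hf2.1
      have hf' : ContDiff ℝ (n : ℕ∞) (deriv f) := by exact_mod_cast hf2.2.2
      have hK' : ∀ y : ℝ, |iteratedDeriv n (deriv f) y| ≤ K := by
        intro y
        have := hK y
        rwa [iteratedDeriv_succ'] at this
      have IH := ih (deriv f) K c hf' hK'
      have hK0 : 0 ≤ K := le_trans (abs_nonneg _) (hK c)
      set E' : ℝ → ℝ :=
        fun y => deriv f y - ∑ i ∈ Finset.range n, iteratedDeriv i (deriv f) c * (y - c)^i / (Nat.factorial i) with hE'def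
      have hE : ∀ y : ℝ, HasDerivAt
          (fun x => f x - ∑ i ∈ Finset.range (n+1), iteratedDeriv i f c * (x - c)^i / (Nat.factorial i))
          (E' y) y := by
        intro y
        have hsum : HasDerivAt
            (fun x => ∑ i ∈ Finset.range (n+1), iteratedDeriv i f c * (x - c)^i / (Nat.factorial i))
            (∑ i ∈ Finset.range (n+1), iteratedDeriv i f c * ((i : ℝ) * (y - c)^(i-1) * 1) / (Nat.factorial i)) y := by
          apply HasDerivAt.fun_sum
          intro i _
          exact ((((hasDerivAt_id y).sub_const c).pow i).const_mul (iteratedDeriv i f c)).div_const _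
        have heq : (∑ i ∈ Finset.range (n+1), iteratedDeriv i f c * ((i : ℝ) * (y - c)^(i-1) * 1) / (Nat.factorial i))
            = ∑ i ∈ Finset.range n, iteratedDeriv i (deriv f) c * (y - c)^i / (Nat.factorial i) := by
          rw [Finset.sum_range_succ']
          simp only [Nat.cast_zero, zero_mul, mul_zero, zero_div, add_zero, mul_one]
          apply Finset.sum_congr rfl
          intro i _
          rw [iteratedDeriv_succ', Nat.factorial_succ]
          have h1 : ((i:ℝ) + 1) ≠ 0 := by positivity
          have h2 : ((Nat.factorial i : ℝ)) ≠ 0 := by positivity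
          push_cast
          field_simp
        rw [heq] at hsum
        exact ((hdiff y).hasDerivAt).sub hsum
      have hcontsum : Continuous (fun y : ℝ => ∑ i ∈ Finset.range n, iteratedDeriv i (deriv f) c * (y - c)^i / (Nat.factorial i)) :=
        continuous_finset_sum _ fun i _ =>
          ((continuous_const.mul ((continuous_id.sub continuous_const).pow i)).div_const _)
      have hcontE' : Continuous E' := (hf'.continuous).sub hcontsum
      have hint : IntervalIntegrable E' MeasureTheory.volume c x := hcontE'.intervalIntegrable c x
      have hFTC := intervalIntegral.integral_eq_sub_of_hasDerivAt (f' := E')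
        (fun y _ => hE y) hint
      have hEc : f c - ∑ i ∈ Finset.range (n+1), iteratedDeriv i f c * (c - c)^i / (Nat.factorial i) = 0 := by
        simp only [sub_eq_zero]
        rw [Finset.sum_eq_single 0]
        · simp
        · intro i _ hi
          rw [sub_self]
          rw [zero_pow hi]
          ring
        · intro h; simp at h
      rw [hEc, sub_zero] at hFTC
      rw [← hFTC]
      have hbound : IntervalIntegrable (fun y => K * |y - c|^n / (Nat.factorial n)) MeasureTheory.volume c x := by
        apply Continuous.intervalIntegrable
        exact (continuous_const.mul ((continuous_abs.comp (continuous_id.sub continuous_const)).pow n)).div_const _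
      have hle := intervalIntegral.norm_integral_le_abs_of_norm_le
        (f := E') (g := fun y => K * |y - c|^n / (Nat.factorial n)) (μ := MeasureTheory.volume)
        (a := c) (b := x)
        (Filter.Eventually.of_forall (fun y => by simpa [hE'def, Real.norm_eq_abs] using IH y)) hbound
      refine le_trans hle ?_
      have hval : |∫ y in c..x, K * |y - c|^n / (Nat.factorial n)|
          = K / (Nat.factorial n) * (|x - c|^(n+1) / (n+1)) := by
        have h1 : (fun y => K * |y - c|^n / ((Nat.factorial n : ℝ)))
            = fun y => (K / (Nat.factorial n)) * |y - c|^n := by funext y; ring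
        rw [h1, intervalIntegral.integral_const_mul, abs_mul,
          intervalIntegral.abs_intervalIntegral_eq, integral_pow_abs_sub_uIoc]
        rw [abs_of_nonneg (by positivity), abs_of_nonneg (by positivity)]
      rw [hval, Nat.factorial_succ]
      apply le_of_eq
      rw [div_mul_div_comm]
      push_cast
      ring

section Gaps

variable (t : ℤ → ℝ) {Tmin Tmax : ℝ}

lemma t_gap_lower (hsp : ∀ k : ℤ, Tmin ≤ t (k + 1) - t k) :
    ∀ (k : ℤ) (m : ℕ), (m : ℝ) * Tmin ≤ t (k + (m:ℤ)) - t k := by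
  intro k m
  induction m with
  | zero => simp
  | succ m ih =>
      have h1 := hsp (k + (m:ℤ))
      have harg : k + ((m:ℤ)+1) = (k + (m:ℤ)) + 1 := by ring
      push_cast
      rw [harg]
      push_cast at ih
      linarith

lemma t_gap_upper (hsp : ∀ k : ℤ, t (k + 1) - t k ≤ Tmax) :
    ∀ (k : ℤ) (m : ℕ), t (k + (m:ℤ)) - t k ≤ (m : ℝ) * Tmax := by
  intro k m
  induction m with
  | zero => simp
  | succ m ih =>
      have h1 := hsp (k + (m:ℤ))
      have harg : k + ((m:ℤ)+1) = (k + (m:ℤ)) + 1 := by ring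
      push_cast
      rw [harg]
      push_cast at ih
      linarith

lemma t_strict (hTmin : 0 < Tmin) (hsp : ∀ k : ℤ, Tmin ≤ t (k + 1) - t k) :
    ∀ (k : ℤ) (n : ℕ), t k < t (k + (n:ℤ) + 1) := by
  intro k n
  have := t_gap_lower t hsp k (n+1)
  have harg : k + ((n:ℤ)+1) = k + (n:ℤ) + 1 := by ring
  push_cast at this
  rw [harg] at this
  nlinarith [Nat.cast_nonneg (α := ℝ) n]

lemma t_mono (hTmin : 0 < Tmin) (hsp : ∀ k : ℤ, Tmin ≤ t (k + 1) - t k) :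
    ∀ (a b : ℤ), a ≤ b → t a ≤ t b := by
  intro a b hab
  obtain ⟨n, rfl⟩ := Int.le.dest hab
  have := t_gap_lower t hsp a n
  nlinarith [Nat.cast_nonneg (α := ℝ) n]

lemma nUD_crude (hTmin : 0 < Tmin) (hsp : ∀ k : ℤ, Tmin ≤ t (k + 1) - t k) :
    ∀ (N : ℕ) (f : ℤ → ℝ) (B : ℝ) (k : ℤ), (∀ j : ℤ, k ≤ j → j ≤ k + N → |f j| ≤ B) →
    |nonUnifDiff t f N k| ≤ 2^N * B / (Nat.factorial N * Tmin^N) := by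
  intro N
  induction N with
  | zero =>
      intro f B k h
      have := h k le_rfl (by simp)
      simpa [nonUnifDiff] using this
  | succ N ih =>
      intro f B k h
      have hB : 0 ≤ B := le_trans (abs_nonneg _) (h k le_rfl (by omega))
      have h1 : |nonUnifDiff t f N (k+1)| ≤ 2^N * B / (Nat.factorial N * Tmin^N) :=
        ih f B (k+1) (fun j hj1 hj2 => h j (by omega) (by push_cast at hj2 ⊢; omega))
      have h2 : |nonUnifDiff t f N k| ≤ 2^N * B / (Nat.factorial N * Tmin^N) :=
        ih f B k (fun j hj1 hj2 => h j hj1 (by push_cast at hj2 ⊢; omega))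
      have hden : ((N:ℝ)+1) * Tmin ≤ t (k + (N:ℤ) + 1) - t k := by
        have := t_gap_lower t hsp k (N+1)
        have harg : k + ((N:ℤ)+1) = k + (N:ℤ) + 1 := by ring
        push_cast at this
        rw [harg] at this
        linarith
      have hdenpos : 0 < t (k + (N:ℤ) + 1) - t k := by
        have : (0:ℝ) < ((N:ℝ)+1) * Tmin := by positivity
        linarith
      rw [nUD_succ, abs_div, abs_of_pos hdenpos]
      have hnum : |nonUnifDiff t f N (k+1) - nonUnifDiff t f N k|
          ≤ 2 * (2^N * B / (Nat.factorial N * Tmin^N)) := by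
        calc |nonUnifDiff t f N (k+1) - nonUnifDiff t f N k|
            ≤ |nonUnifDiff t f N (k+1)| + |nonUnifDiff t f N k| := abs_sub _ _
          _ ≤ 2 * (2^N * B / (Nat.factorial N * Tmin^N)) := by linarith
      calc |nonUnifDiff t f N (k+1) - nonUnifDiff t f N k| / (t (k + (N:ℤ) + 1) - t k)
          ≤ (2 * (2^N * B / (Nat.factorial N * Tmin^N))) / (((N:ℝ)+1) * Tmin) := by
            apply div_le_div₀ (by positivity) hnum (by positivity) hden
        _ = 2^(N+1) * B / (Nat.factorial (N+1) * Tmin^(N+1)) := by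
            rw [Nat.factorial_succ]
            have hf : ((Nat.factorial N : ℝ)) ≠ 0 := by positivity
            push_cast
            field_simp
            ring

end Gaps

/-- bound on the nonuniform divided difference of the
antiderivative `G` of a bounded function `g` satisfying a Bernstein-type bound. -/
theorem bound_nonUnifDiff_of_antiderivative
    (t : ℤ → ℝ) (Tmin Tmax Ω M : ℝ)
    (hTmin : 0 < Tmin) (hΩ : 0 < Ω)
    (hspace : ∀ k : ℤ, Tmin ≤ t (k + 1) - t k ∧ t (k + 1) - t k ≤ Tmax)
    (G g : ℝ → ℝ) (N : ℕ) (hN : 1 ≤ N)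
    (hG : ContDiff ℝ (N : ℕ∞) G)
    (hG' : deriv G = g)
    (hbnd : ∀ s : ℝ, |g s| ≤ M)
    (hbern : ∀ s : ℝ, |iteratedDeriv (N - 1) g s| ≤ Ω ^ (N - 1) * M) :
    ∀ k : ℤ, |nonUnifDiff t (fun j => G (t j)) N k| ≤
      (1 / (Ω * (N.factorial : ℝ))) * ((Tmax / Tmin) * Ω * Real.exp 1) ^ N * M := by
  intro k
  have hsp1 : ∀ k : ℤ, Tmin ≤ t (k + 1) - t k := fun k => (hspace k).1
  have hsp2 : ∀ k : ℤ, t (k + 1) - t k ≤ Tmax := fun k => (hspace k).2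
  have hd : ∀ (k : ℤ) (n : ℕ), t k < t (k + (n:ℤ) + 1) := t_strict t hTmin hsp1
  have hTmax : 0 < Tmax := lt_of_lt_of_le hTmin (le_trans (hsp1 0) (hsp2 0))
  have hM : 0 ≤ M := le_trans (abs_nonneg _) (hbnd 0)
  set c : ℝ := (t k + t (k + (N:ℤ))) / 2 with hc
  set K : ℝ := Ω ^ (N - 1) * M with hK
  have hK0 : 0 ≤ K := by positivity
  have hKbound : ∀ y : ℝ, |iteratedDeriv N G y| ≤ K := by
    intro y
    have hNe : N = (N - 1) + 1 := (Nat.succ_pred_eq_of_pos hN).symm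
    conv_lhs => rw [hNe]
    rw [iteratedDeriv_succ', hG']
    exact hbern y
  have hTay := taylor_two_sided_bound N G K c hG hKbound
  have hsumeq : ∀ x : ℝ, (∑ i ∈ Finset.range N, iteratedDeriv i G c * (x - c)^i / (Nat.factorial i))
      = ∑ i ∈ Finset.range N, (iteratedDeriv i G c / (Nat.factorial i)) * (x - c)^i :=
    fun x => Finset.sum_congr rfl (fun i _ => by ring)
  have hTzero : nonUnifDiff t
      (fun j => ∑ i ∈ Finset.range N, (iteratedDeriv i G c / (Nat.factorial i)) * (t j - c)^i) N k = 0 := by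
    rw [nUD_sum t N (fun i => iteratedDeriv i G c / (Nat.factorial i)) (fun i j => (t j - c)^i) N k]
    apply Finset.sum_eq_zero
    intro i hi
    rw [nUD_pow t hd c i N (Finset.mem_range.mp hi) k, mul_zero]
  have hRrepr : nonUnifDiff t (fun j => G (t j)) N k
      = nonUnifDiff t (fun j => G (t j)
          - ∑ i ∈ Finset.range N, (iteratedDeriv i G c / (Nat.factorial i)) * (t j - c)^i) N k := by
    rw [nUD_sub, hTzero, sub_zero]
  set B : ℝ := K * ((N:ℝ) * Tmax / 2)^N / (Nat.factorial N) with hBdef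
  have hnode : ∀ j : ℤ, k ≤ j → j ≤ k + (N:ℤ) →
      |G (t j) - ∑ i ∈ Finset.range N, (iteratedDeriv i G c / (Nat.factorial i)) * (t j - c)^i| ≤ B := by
    intro j hj1 hj2
    have h1 := hTay (t j)
    rw [hsumeq] at h1
    refine le_trans h1 ?_
    have htj1 : t k ≤ t j := t_mono t hTmin hsp1 k j hj1
    have htj2 : t j ≤ t (k + (N:ℤ)) := t_mono t hTmin hsp1 j (k + (N:ℤ)) hj2
    have hgap : t (k + (N:ℤ)) - t k ≤ (N:ℝ) * Tmax := t_gap_upper t hsp2 k N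
    have habs : |t j - c| ≤ (N:ℝ) * Tmax / 2 := by
      rw [abs_le, hc]
      constructor <;> linarith
    rw [hBdef]
    gcongr
  rw [hRrepr]
  have hcrude := nUD_crude t hTmin hsp1 N _ B k hnode
  refine le_trans hcrude ?_
  -- final numeric comparison
  have hfacpos : (0:ℝ) < (Nat.factorial N : ℝ) := by positivity
  set A : ℝ := Ω ^ (N-1) * M * (Tmax/Tmin)^N / (Nat.factorial N) with hA
  have hA0 : 0 ≤ A := by positivity
  have hLHS : 2^N * B / (Nat.factorial N * Tmin^N) = A * ((N:ℝ)^N / (Nat.factorial N)) := by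
    rw [hBdef, hK, hA]
    field_simp
    have e1 : ((1:ℝ)/2)^N * 2^N = 1 := by rw [← mul_pow]; norm_num
    have e2 : Tmin^N * Tmin⁻¹^N = 1 := by rw [← mul_pow, mul_inv_cancel₀ hTmin.ne', one_pow]
    linear_combination (M * (N:ℝ)^N * Tmax^N) * (e1 - e2)
  have hRHS : (1 / (Ω * (N.factorial : ℝ))) * ((Tmax / Tmin) * Ω * Real.exp 1) ^ N * M
      = A * (Real.exp 1)^N := by
    have hpow : Ω ^ (N-1) * Ω = Ω ^ N := by
      rw [← pow_succ]; congr 1; omega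
    rw [hA, mul_pow, mul_pow, ← hpow]
    field_simp
  rw [hLHS, hRHS]
  apply mul_le_mul_of_nonneg_left _ hA0
  have h1 : ((N:ℝ))^N / (Nat.factorial N) ≤ Real.exp N :=
    Real.pow_div_factorial_le_exp (x := (N:ℝ)) (by positivity) N
  have h2 : Real.exp (N:ℝ) = (Real.exp 1)^N := by
    rw [← Real.exp_nat_mul]; norm_num
  rw [← h2]
  exact h1
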